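/- For every real a ≥ 0 there exists a unique analytic function T_a on the cut plane ℂ∖(−∞,−1] such that T_a(x) = cos(a·arccos x) for all real x ∈ (−1, 1]. -/

import Mathlib

open Complex Set Filter

/-- The cut plane `ℂ ∖ (−∞, −1]`. -/
def cutC : Set ℂ := {z : ℂ | z.im = 0 ∧ z.re ≤ -1}ᶜ

/-- `T` is an analytic function on the cut plane `ℂ ∖ (−∞, −1]` agreeing with
`x ↦ cos (a · arccos x)` on `(−1, 1]`. -/
def IsChebyshev (a : ℝ) (T : ℂ → ℂ) : Prop :=
  (∀ z ∈ cutC, DifferentiableAt ℂ T z) ∧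
  ∀ x : ℝ, x ∈ Set.Ioc (-1 : ℝ) 1 → T (x : ℂ) = ((Real.cos (a * Real.arccos x) : ℝ) : ℂ)

noncomputable def Tche (a : ℝ) (z : ℂ) : ℂ :=
  Complex.cos ((a : ℂ) * (-Complex.I * Complex.log (z + Complex.I * (1 - z ^ 2) ^ (1/2 : ℂ))))

noncomputable def Tche2 (a : ℝ) (z : ℂ) : ℂ :=
  Complex.cosh ((a : ℂ) * Complex.log (z + (z ^ 2 - 1) ^ (1/2 : ℂ)))

lemma cutC_isOpen : IsOpen cutC := by
  have : IsClosed {z : ℂ | z.im = 0 ∧ z.re ≤ -1} := by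
    have h1 : IsClosed {z : ℂ | z.im = 0} := isClosed_eq Complex.continuous_im continuous_const
    have h2 : IsClosed {z : ℂ | z.re ≤ -1} := isClosed_le Complex.continuous_re continuous_const
    exact h1.inter h2
  exact this.isOpen_compl

lemma one_mem_cutC : (1 : ℂ) ∈ cutC := by
  simp [cutC]

lemma zero_mem_cutC : (0 : ℂ) ∈ cutC := by
  simp [cutC]

/-- key algebra: if `w` is on the closed negative real axis and `w^2 - 2wz = -1`
then `z` is a real number `≤ -1`. -/
lemma key_alg {w z : ℂ} (hre : w.re ≤ 0) (him : w.im = 0)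
    (heq : w ^ 2 - 2 * w * z = -1) : ∃ t : ℝ, t ≤ -1 ∧ z = (t : ℂ) := by
  have hw : w = (w.re : ℂ) := by
    rw [Complex.ext_iff]; simp [him]
  have hwne : w ≠ 0 := by
    intro h0
    rw [h0] at heq
    simp at heq
  have hrne : w.re ≠ 0 := fun h => hwne (by rw [hw, h]; simp)
  have hrneg : w.re < 0 := lt_of_le_of_ne hre hrne
  set r := w.re with hr
  refine ⟨(r ^ 2 + 1) / (2 * r), ?_, ?_⟩
  · rw [div_le_iff_of_neg (by linarith : 2 * r < 0)]
    nlinarith [sq_nonneg (r + 1)]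
  · have h2r : (2 : ℂ) * (r : ℂ) ≠ 0 := by
      simp [Complex.ofReal_ne_zero.mpr hrne]
    push_cast; rw [eq_div_iff h2r]
    rw [hw] at heq
    linear_combination -heq
  
/-- If `1 - z^2` is in the slit plane, so is `z + i √(1-z²)`. -/
lemma memA {z : ℂ} (h : 1 - z ^ 2 ∈ Complex.slitPlane) :
    z + Complex.I * (1 - z ^ 2) ^ (1/2 : ℂ) ∈ Complex.slitPlane := by
  by_contra hc
  set s := (1 - z ^ 2) ^ (1/2 : ℂ) with hs
  have hne : (1 - z ^ 2) ≠ 0 := Complex.slitPlane_ne_zero h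
  have hs2 : s ^ 2 = 1 - z ^ 2 := by
    rw [hs, sq, ← Complex.cpow_add _ _ hne]
    norm_num
  set w := z + Complex.I * s with hwdef
  rw [Complex.mem_slitPlane_iff] at hc
  push_neg at hc
  have heq : w ^ 2 - 2 * w * z = -1 := by
    have h2 : (w - z) ^ 2 = z ^ 2 - 1 := by
      rw [hwdef]
      have hI : (Complex.I * s) ^ 2 = -(s ^ 2) := by
        rw [mul_pow, Complex.I_sq]; ring
      rw [show z + Complex.I * s - z = Complex.I * s by ring, hI, hs2]; ring
    linear_combination h2
  obtain ⟨t, ht, hzt⟩ := key_alg (w := w) (z := z) hc.1 hc.2 heq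
  have hz2 : 1 - z ^ 2 = ((1 - t ^ 2 : ℝ) : ℂ) := by rw [hzt]; push_cast; ring
  rw [hz2, Complex.mem_slitPlane_iff] at h
  simp only [Complex.ofReal_re, Complex.ofReal_im, ne_eq, not_true_eq_false, or_false] at h
  nlinarith

/-- If `z ∈ cutC` and `z^2 - 1` is in the slit plane, so is `z + √(z²-1)`. -/
lemma memB {z : ℂ} (hz : z ∈ cutC) (h : z ^ 2 - 1 ∈ Complex.slitPlane) :
    z + (z ^ 2 - 1) ^ (1/2 : ℂ) ∈ Complex.slitPlane := by
  by_contra hc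
  set s := (z ^ 2 - 1) ^ (1/2 : ℂ) with hs
  have hne : (z ^ 2 - 1) ≠ 0 := Complex.slitPlane_ne_zero h
  have hs2 : s ^ 2 = z ^ 2 - 1 := by
    rw [hs, sq, ← Complex.cpow_add _ _ hne]
    norm_num
  set w := z + s with hwdef
  rw [Complex.mem_slitPlane_iff] at hc
  push_neg at hc
  have heq : w ^ 2 - 2 * w * z = -1 := by
    have h2 : (w - z) ^ 2 = z ^ 2 - 1 := by
      rw [hwdef, show z + s - z = s by ring, hs2]
    linear_combination h2
  obtain ⟨t, ht, hzt⟩ := key_alg (w := w) (z := z) hc.1 hc.2 heq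
  apply hz
  constructor
  · rw [hzt]; simp
  · rw [hzt]; simpa using ht

/-- `Tche` agrees with `Tche2` where both are defined. -/
lemma Tche_eq_Tche2 {a : ℝ} {z : ℂ} (hz : z ∈ cutC) (h : z ^ 2 - 1 ∈ Complex.slitPlane) :
    Tche a z = Tche2 a z := by
  set s1 := (1 - z ^ 2) ^ (1/2 : ℂ) with hs1
  set s2 := (z ^ 2 - 1) ^ (1/2 : ℂ) with hs2
  have hne : (z ^ 2 - 1) ≠ 0 := Complex.slitPlane_ne_zero h
  have hne' : (1 - z ^ 2) ≠ 0 := by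
    intro h0; apply hne; linear_combination -h0
  have hsq1 : s1 ^ 2 = 1 - z ^ 2 := by
    rw [hs1, sq, ← Complex.cpow_add _ _ hne']; norm_num
  have hsq2 : s2 ^ 2 = z ^ 2 - 1 := by
    rw [hs2, sq, ← Complex.cpow_add _ _ hne]; norm_num
  have hw2 : z + s2 ∈ Complex.slitPlane := memB hz h
  set w := z + s2 with hw
  have hcases : Complex.I * s1 = s2 ∨ Complex.I * s1 = -s2 := by
    have : (Complex.I * s1) * (Complex.I * s1) = s2 * s2 := by
      have : (Complex.I * s1) ^ 2 = -(s1 ^ 2) := by rw [mul_pow, Complex.I_sq]; ring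
      rw [← sq, ← sq, this, hsq1, hsq2]; ring
    exact mul_self_eq_mul_self_iff.mp this
  rcases hcases with hc | hc
  · have : z + Complex.I * s1 = w := by rw [hc]
    rw [Tche, Tche2, this,
      show ((a : ℂ) * (-Complex.I * Complex.log w)) = -((a : ℂ) * Complex.log w * Complex.I) by ring,
      Complex.cos_neg, Complex.cos_mul_I]
  · have hinv : z + Complex.I * s1 = w⁻¹ := by
      rw [hc]
      have hwne : w ≠ 0 := Complex.slitPlane_ne_zero hw2
      field_simp
      rw [hw]
      linear_combination -hsq2
    rw [Tche, Tche2, hinv, Complex.log_inv _ (Complex.slitPlane_arg_ne_pi hw2),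
      show ((a : ℂ) * (-Complex.I * -Complex.log w)) = ((a : ℂ) * Complex.log w * Complex.I) by ring,
      Complex.cos_mul_I]

lemma Tche_diffAt {a : ℝ} {z : ℂ} (h : 1 - z ^ 2 ∈ Complex.slitPlane) :
    DifferentiableAt ℂ (Tche a) z := by
  have h1 : DifferentiableAt ℂ (fun z : ℂ => (1 - z ^ 2) ^ (1/2 : ℂ)) z :=
    DifferentiableAt.cpow (by fun_prop) (differentiableAt_const _) h
  have h2 : DifferentiableAt ℂ (fun z : ℂ => z + Complex.I * (1 - z ^ 2) ^ (1/2 : ℂ)) z := by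
    fun_prop
  have h3 : DifferentiableAt ℂ
      (fun z : ℂ => Complex.log (z + Complex.I * (1 - z ^ 2) ^ (1/2 : ℂ))) z :=
    h2.clog (memA h)
  exact ((h3.const_mul _).const_mul _).ccos

lemma Tche2_diffAt {a : ℝ} {z : ℂ} (hz : z ∈ cutC) (h : z ^ 2 - 1 ∈ Complex.slitPlane) :
    DifferentiableAt ℂ (Tche2 a) z := by
  have h1 : DifferentiableAt ℂ (fun z : ℂ => (z ^ 2 - 1) ^ (1/2 : ℂ)) z :=
    DifferentiableAt.cpow (by fun_prop) (differentiableAt_const _) h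
  have h2 : DifferentiableAt ℂ (fun z : ℂ => z + (z ^ 2 - 1) ^ (1/2 : ℂ)) z := by fun_prop
  have h3 : DifferentiableAt ℂ
      (fun z : ℂ => Complex.log (z + (z ^ 2 - 1) ^ (1/2 : ℂ))) z := h2.clog (memB hz h)
  exact (h3.const_mul _).ccosh

lemma cover {z : ℂ} (hz : z ∈ cutC) (hne : z ≠ 1)
    (h : ¬(1 - z ^ 2 ∈ Complex.slitPlane)) : z ^ 2 - 1 ∈ Complex.slitPlane := by
  rw [Complex.mem_slitPlane_iff] at h ⊢
  push_neg at h
  obtain ⟨hre, him⟩ := h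
  simp only [Complex.sub_re, Complex.sub_im, Complex.one_re, Complex.one_im] at hre him ⊢
  set x := z.re with hx
  set y := z.im with hy
  have hre2 : (z ^ 2).re = x ^ 2 - y ^ 2 := by
    rw [sq, Complex.mul_re]; ring
  have him2 : (z ^ 2).im = 2 * x * y := by
    rw [sq, Complex.mul_im]; ring
  rw [hre2] at hre
  rw [him2] at him
  rw [hre2, him2]
  -- him : 0 - 2xy = 0, hre : 1 - (x² - y²) ≤ 0
  have hxy : x * y = 0 := by linarith
  rcases mul_eq_zero.mp hxy with hx0 | hy0
  · exfalso; nlinarith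
  · -- y = 0, so x² ≥ 1, x ≠ -1-ish excluded by cutC, x ≠ 1 since z ≠ 1
    have hcut : ¬ (y = 0 ∧ x ≤ -1) := hz
    have hxne1 : x ≠ 1 := by
      intro h1
      apply hne
      rw [Complex.ext_iff]
      simp [← hx, ← hy, h1, hy0]
    have : 1 < x := by
      rcases lt_trichotomy x 1 with h1 | h1 | h1
      · exfalso
        have : x ≤ -1 := by nlinarith
        exact hcut ⟨hy0, this⟩
      · exact absurd h1 hxne1
      · exact h1
    left; nlinarith

lemma Tche_contAt_one {a : ℝ} : ContinuousAt (Tche a) 1 := by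
  have hcpow : ContinuousAt (fun p : ℂ × ℂ => p.1 ^ p.2) ((0 : ℂ), (1/2 : ℂ)) :=
    Complex.continuousAt_cpow_zero_of_re_pos (by norm_num)
  have hpair : ContinuousAt (fun z : ℂ => ((1 - z ^ 2 : ℂ), (1/2 : ℂ))) 1 := by fun_prop
  have h1 : ContinuousAt (fun z : ℂ => (1 - z ^ 2) ^ (1/2 : ℂ)) 1 := by
    have : ((fun z : ℂ => ((1 - z ^ 2 : ℂ), (1/2 : ℂ))) 1) = ((0 : ℂ), (1/2 : ℂ)) := by norm_num
    refine ContinuousAt.comp (g := fun p : ℂ × ℂ => p.1 ^ p.2) (x := (1 : ℂ)) ?_ hpair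
    show ContinuousAt _ ((1 - 1 ^ 2 : ℂ), (1/2 : ℂ))
    rw [show ((1 : ℂ) - 1 ^ 2) = 0 by norm_num]
    exact hcpow
  have h2 : ContinuousAt (fun z : ℂ => z + Complex.I * (1 - z ^ 2) ^ (1/2 : ℂ)) 1 :=
    continuousAt_id.add (continuousAt_const.mul h1)
  have hval : (1 : ℂ) + Complex.I * ((1 : ℂ) - 1 ^ 2) ^ (1/2 : ℂ) = 1 := by
    rw [show ((1 : ℂ) - 1 ^ 2) = 0 by norm_num,
      Complex.zero_cpow (by norm_num : (1/2 : ℂ) ≠ 0)]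
    simp
  have h3 : ContinuousAt (fun z : ℂ =>
      Complex.log (z + Complex.I * (1 - z ^ 2) ^ (1/2 : ℂ))) 1 := by
    refine ContinuousAt.comp (g := Complex.log) (x := (1 : ℂ)) ?_ h2
    show ContinuousAt Complex.log ((1 : ℂ) + Complex.I * ((1 : ℂ) - 1 ^ 2) ^ (1/2 : ℂ))
    rw [hval]
    exact continuousAt_clog (by simp)
  exact (Complex.continuous_cos.continuousAt).comp ((h3.const_mul _).const_mul _)

lemma Tche_diffOn {a : ℝ} : ∀ z ∈ cutC, DifferentiableAt ℂ (Tche a) z := by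
  have hopen := cutC_isOpen
  have hd' : DifferentiableOn ℂ (Tche a) (cutC \ {1}) := by
    rintro z ⟨hz, hz1⟩
    apply DifferentiableAt.differentiableWithinAt
    by_cases h : 1 - z ^ 2 ∈ Complex.slitPlane
    · exact Tche_diffAt h
    · have h2 : z ^ 2 - 1 ∈ Complex.slitPlane := cover hz (by simpa using hz1) h
      have hU : IsOpen (cutC ∩ {w : ℂ | w ^ 2 - 1 ∈ Complex.slitPlane}) :=
        hopen.inter (Complex.isOpen_slitPlane.preimage (by fun_prop))
      have hmemU : z ∈ cutC ∩ {w : ℂ | w ^ 2 - 1 ∈ Complex.slitPlane} := ⟨hz, h2⟩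
      have heq : Tche a =ᶠ[nhds z] Tche2 a := by
        filter_upwards [hU.mem_nhds hmemU] with w hw
        exact Tche_eq_Tche2 hw.1 hw.2
      exact (Tche2_diffAt hz h2).congr_of_eventuallyEq heq
  have hmem : cutC ∈ nhds (1 : ℂ) := hopen.mem_nhds one_mem_cutC
  have hDO : DifferentiableOn ℂ (Tche a) cutC :=
    (Complex.differentiableOn_compl_singleton_and_continuousAt_iff hmem).mp
      ⟨hd', Tche_contAt_one⟩
  exact fun z hz => hDO.differentiableAt (hopen.mem_nhds hz)

lemma Tche_boundary {a : ℝ} {x : ℝ} (hx : x ∈ Set.Ioc (-1 : ℝ) 1) :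
    Tche a (x : ℂ) = ((Real.cos (a * Real.arccos x) : ℝ) : ℂ) := by
  set θ := Real.arccos x with hθ
  have h0 : (0 : ℝ) ≤ 1 - x ^ 2 := by nlinarith [hx.1, hx.2]
  have hcast : (1 : ℂ) - (x : ℂ) ^ 2 = ((1 - x ^ 2 : ℝ) : ℂ) := by push_cast; ring
  have hsqrt : ((1 : ℂ) - (x : ℂ) ^ 2) ^ (1/2 : ℂ) = ((Real.sqrt (1 - x ^ 2) : ℝ) : ℂ) := by
    rw [hcast, Real.sqrt_eq_rpow, Complex.ofReal_cpow h0]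
    norm_num
  have hexp : (x : ℂ) + Complex.I * ((Real.sqrt (1 - x ^ 2) : ℝ) : ℂ) =
      Complex.exp ((θ : ℂ) * Complex.I) := by
    rw [Complex.exp_mul_I, ← Complex.ofReal_cos, ← Complex.ofReal_sin,
      Real.cos_arccos hx.1.le hx.2, Real.sin_arccos]
    ring
  have hlog : Complex.log (Complex.exp ((θ : ℂ) * Complex.I)) = (θ : ℂ) * Complex.I := by
    apply Complex.log_exp
    · simp only [Complex.mul_im, Complex.ofReal_re, Complex.I_im, Complex.ofReal_im,
        Complex.I_re, mul_zero, mul_one, zero_mul, add_zero, zero_add]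
      have := Real.pi_pos
      have := Real.arccos_nonneg x
      linarith
    · simp only [Complex.mul_im, Complex.ofReal_re, Complex.I_im, Complex.ofReal_im,
        Complex.I_re, mul_zero, mul_one, zero_mul, add_zero, zero_add]
      exact Real.arccos_le_pi x
  rw [Tche, hsqrt, hexp, hlog,
    show ((a : ℂ) * (-Complex.I * ((θ : ℂ) * Complex.I))) = ((a * θ : ℝ) : ℂ) by
      push_cast; linear_combination (-(a : ℂ) * (θ : ℂ)) * Complex.I_mul_I,
    Complex.ofReal_cos]

lemma cutC_preconnected : IsPreconnected cutC := by
  have hpath : IsPathConnected cutC := by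
    refine ⟨1, one_mem_cutC, fun {z} hz => JoinedIn.of_segment_subset ?_⟩
    intro w hw
    rw [segment_eq_image] at hw
    obtain ⟨t, ht, rfl⟩ := hw
    intro hbad
    obtain ⟨him, hre⟩ := hbad
    have him' : ((1 - t) • (1 : ℂ) + t • z).im = t * z.im := by
      simp [Complex.add_im, Complex.smul_im]
    have hre' : ((1 - t) • (1 : ℂ) + t • z).re = (1 - t) + t * z.re := by
      simp [Complex.add_re, Complex.smul_re]
    rw [him'] at him
    rw [hre'] at hre
    have hzcut : ¬ (z.im = 0 ∧ z.re ≤ -1) := hz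
    rcases mul_eq_zero.mp him with ht0 | hz0
    · -- t = 0 : point is 1
      rw [ht0] at hre
      norm_num at hre
    · -- z is real with z.re > -1
      have hzre : -1 < z.re := by
        by_contra hle
        exact hzcut ⟨hz0, by linarith⟩
      rcases ht.1.lt_or_eq with htpos | ht0
      · have := mul_pos htpos (show (0:ℝ) < z.re + 1 by linarith)
        nlinarith [ht.2]
      · rw [← ht0] at hre
        norm_num at hre
  exact hpath.isConnected.isPreconnected

/-- For every `a ≥ 0` there is a unique analytic function on `ℂ ∖ (−∞,−1]` agreeing
with `x ↦ cos (a · arccos x)` on `(−1, 1]`. -/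
theorem stmt5 (a : ℝ) (ha : 0 ≤ a) :
    (∃ T : ℂ → ℂ, IsChebyshev a T) ∧
    ∀ T T' : ℂ → ℂ, IsChebyshev a T → IsChebyshev a T' → Set.EqOn T T' cutC := by
  constructor
  · exact ⟨Tche a, Tche_diffOn, fun x hx => Tche_boundary hx⟩
  · intro T T' hT hT'
    have hDT : DifferentiableOn ℂ T cutC := fun z hz => (hT.1 z hz).differentiableWithinAt
    have hDT' : DifferentiableOn ℂ T' cutC := fun z hz => (hT'.1 z hz).differentiableWithinAt
    have hAnT : AnalyticOnNhd ℂ T cutC := hDT.analyticOnNhd cutC_isOpen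
    have hAnT' : AnalyticOnNhd ℂ T' cutC := hDT'.analyticOnNhd cutC_isOpen
    apply hAnT.eqOn_of_preconnected_of_frequently_eq hAnT' cutC_preconnected zero_mem_cutC
    have hu : Tendsto (fun n : ℕ => (((1 : ℝ)/(n + 1) : ℝ) : ℂ)) atTop (nhdsWithin 0 {(0 : ℂ)}ᶜ) := by
      apply tendsto_nhdsWithin_of_tendsto_nhds_of_eventually_within
      · have h0 : Tendsto (fun n : ℕ => ((1 : ℝ)/(n + 1) : ℝ)) atTop (nhds 0) :=
          tendsto_one_div_add_atTop_nhds_zero_nat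
        have h1 := (Complex.continuous_ofReal.tendsto 0).comp h0
        simp only [Function.comp_def, Complex.ofReal_zero] at h1
        exact h1
      · refine Eventually.of_forall fun n => ?_
        have : (0 : ℝ) < 1/(n + 1) := by positivity
        simp only [Set.mem_compl_iff, Set.mem_singleton_iff]
        exact_mod_cast ne_of_gt (by exact_mod_cast this)
    apply hu.frequently
    apply Frequently.of_forall
    intro n
    have hmem : (1 : ℝ)/(n + 1) ∈ Set.Ioc (-1 : ℝ) 1 := by
      have hpos : (0 : ℝ) < 1/(n + 1) := by positivity
      constructor
      · linarith
      · rw [div_le_one (by positivity)]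
        have : (0:ℝ) ≤ (n:ℝ) := n.cast_nonneg
        linarith
    rw [hT.2 _ hmem, hT'.2 _ hmem]
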